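/- Let ψ, θ_1,…,θ_M and D_1,…,D_M be random variables on a common probability space taking values in finite sets. Assume (a) θ_1,…,θ_M are mutually conditionally independent given ψ, and (b) for each m, D_m is conditionally independent of ((θ_j, D_j) : j ≠ m) given (ψ, θ_m). Then I( (D_1,…,D_M) ; (ψ, θ_1,…,θ_M) ) = I( (D_1,…,D_M) ; ψ ) + ∑_{m=1}^{M} I( D_m ; θ_m | ψ ). (Dividing by MT, the optimal meta-learning estimation error decomposes exactly into a meta-estimation error I(H_{M,T};ψ)/(MT) plus intra-task estimation errors ∑_m I(X^{(m)}_{0:T};θ_m|ψ)/(MT).) -/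

import Mathlib

/-!
Statement 5 (meta-learning estimation error decomposition): if the task parameters
`θ_1,…,θ_M` are mutually conditionally independent given the meta-parameters `ψ` (expressed
via the equivalent entropy identity `H(θ_{1:M}|ψ) = ∑_m H(θ_m|ψ)`), and each task's data
`D_m` is conditionally independent of all other tasks' parameters and data given `(ψ, θ_m)`
(expressed via vanishing conditional mutual information), then
`I(D_{1:M}; (ψ, θ_{1:M})) = I(D_{1:M}; ψ) + ∑_m I(D_m; θ_m | ψ)`.
-/

open scoped Classical

noncomputable section

/-- Probability of the event `X = a` under the pmf `p` on a finite sample space. -/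
def pr {Ω : Type*} [Fintype Ω] (p : Ω → ℝ) {A : Type*} (X : Ω → A) (a : A) : ℝ :=
  ∑ ω, if X ω = a then p ω else 0

/-- Shannon entropy of a random variable (in nats). -/
def entropy {Ω : Type*} [Fintype Ω] (p : Ω → ℝ) {A : Type*} [Fintype A] (X : Ω → A) : ℝ :=
  ∑ a, Real.negMulLog (pr p X a)

/-- Conditional entropy `H(X|Y) = H(X,Y) - H(Y)` (in nats). -/
def condEntropy {Ω : Type*} [Fintype Ω] (p : Ω → ℝ) {A B : Type*} [Fintype A] [Fintype B]
    (X : Ω → A) (Y : Ω → B) : ℝ :=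
  entropy p (fun ω => (X ω, Y ω)) - entropy p Y

/-- Mutual information `I(X;Y) = H(X) + H(Y) - H(X,Y)` (in nats). -/
def mutualInfo {Ω : Type*} [Fintype Ω] (p : Ω → ℝ) {A B : Type*} [Fintype A] [Fintype B]
    (X : Ω → A) (Y : Ω → B) : ℝ :=
  entropy p X + entropy p Y - entropy p (fun ω => (X ω, Y ω))

/-- Conditional mutual information `I(X;Y|Z) = H(X,Z) + H(Y,Z) - H(X,Y,Z) - H(Z)` (in nats). -/
def condMutualInfo {Ω : Type*} [Fintype Ω] (p : Ω → ℝ) {A B C : Type*}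
    [Fintype A] [Fintype B] [Fintype C] (X : Ω → A) (Y : Ω → B) (Z : Ω → C) : ℝ :=
  entropy p (fun ω => (X ω, Z ω)) + entropy p (fun ω => (Y ω, Z ω))
    - entropy p (fun ω => ((X ω, Y ω), Z ω)) - entropy p Z

section aux

variable {Ω : Type*} [Fintype Ω] {p : Ω → ℝ}

lemma pr_nonneg (hp0 : ∀ ω, 0 ≤ p ω) {A : Type*} (X : Ω → A) (a : A) :
    0 ≤ pr p X a :=
  Finset.sum_nonneg fun ω _ => by split <;> simp [hp0 ω]

lemma sum_pr (hp1 : ∑ ω, p ω = 1) {A : Type*} [Fintype A] (X : Ω → A) :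
    ∑ a, pr p X a = 1 := by
  rw [← hp1]
  unfold pr
  rw [Finset.sum_comm]
  exact Finset.sum_congr rfl fun ω _ => by simp

lemma pr_comp {A B : Type*} [Fintype A] (g : A → B) (X : Ω → A) (b : B) :
    pr p (fun ω => g (X ω)) b = ∑ a, if g a = b then pr p X a else 0 := by
  unfold pr
  have : ∀ a : A, (if g a = b then ∑ ω, if X ω = a then p ω else 0 else 0)
      = ∑ ω, if g a = b then (if X ω = a then p ω else 0) else 0 := by
    intro a; split <;> simp
  simp_rw [this]
  rw [Finset.sum_comm]
  refine Finset.sum_congr rfl fun ω _ => ?_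
  rw [Finset.sum_eq_single (X ω)]
  · simp
  · intro a _ ha; simp [if_neg (Ne.symm ha)]
  · simp

lemma entropy_comp_inj {A B : Type*} [Fintype A] [Fintype B] (g : A → B)
    (hg : Function.Injective g) (X : Ω → A) :
    entropy p (fun ω => g (X ω)) = entropy p X := by
  unfold entropy
  rw [← Finset.sum_subset (Finset.subset_univ (Finset.image g Finset.univ))]
  · rw [Finset.sum_image (fun a _ a' _ h => hg h)]
    refine Finset.sum_congr rfl fun a _ => ?_
    congr 1
    rw [pr_comp]
    rw [Finset.sum_eq_single a]
    · simp
    · intro a' _ ha'; rw [if_neg (fun h => ha' (hg h))]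
    · simp
  · intro b _ hb
    have hz : pr p (fun ω => g (X ω)) b = 0 := by
      rw [pr_comp]
      refine Finset.sum_eq_zero fun a _ => ?_
      have : g a ≠ b := fun h => hb (Finset.mem_image.2 ⟨a, Finset.mem_univ a, h⟩)
      simp [this]
    simp [hz]

lemma entropy_congr₂ {A B : Type*} [Fintype A] [Fintype B] {X : Ω → A} {Y : Ω → B}
    (f : A → B) (g : B → A) (hf : ∀ ω, Y ω = f (X ω)) (hg : ∀ ω, X ω = g (Y ω)) :
    entropy p Y = entropy p X := by
  have h1 : entropy p (fun ω => (X ω, Y ω)) = entropy p X := by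
    have e : (fun ω => (X ω, Y ω)) = (fun ω => (fun a => (a, f a)) (X ω)) := by
      funext ω; simp [hf ω]
    rw [e, entropy_comp_inj (fun a => (a, f a)) (fun a a' h => congrArg Prod.fst h)]
  have h2 : entropy p (fun ω => (Y ω, X ω)) = entropy p Y := by
    have e : (fun ω => (Y ω, X ω)) = (fun ω => (fun b => (b, g b)) (Y ω)) := by
      funext ω; simp [hg ω]
    rw [e, entropy_comp_inj (fun b => (b, g b)) (fun a a' h => congrArg Prod.fst h)]
  have h3 : entropy p (fun ω => (Y ω, X ω)) = entropy p (fun ω => (X ω, Y ω)) := by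
    have e : (fun ω => (Y ω, X ω)) = (fun ω => Prod.swap ((fun ω' => (X ω', Y ω')) ω)) := rfl
    rw [e, entropy_comp_inj Prod.swap Prod.swap_injective]
  rw [← h2, h3, h1]

end aux

section aux2

variable {Ω : Type*} [Fintype Ω] {p : Ω → ℝ}
variable {A B C D : Type*} [Fintype A] [Fintype B] [Fintype C] [Fintype D]

lemma entropy_comm (X : Ω → A) (Y : Ω → B) :
    entropy p (fun ω => (Y ω, X ω)) = entropy p (fun ω => (X ω, Y ω)) :=
  entropy_congr₂ (fun x => (x.2, x.1)) (fun x => (x.2, x.1)) (fun _ => rfl) (fun _ => rfl)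

lemma cmi_eq (X : Ω → A) (Y : Ω → B) (Z : Ω → C) :
    condMutualInfo p X Y Z
      = condEntropy p X Z - condEntropy p X (fun ω => (Z ω, Y ω)) := by
  unfold condMutualInfo condEntropy
  have e1 : entropy p (fun ω => (Y ω, Z ω)) = entropy p (fun ω => (Z ω, Y ω)) :=
    entropy_comm Z Y
  have e2 : entropy p (fun ω => ((X ω, Y ω), Z ω))
      = entropy p (fun ω => (X ω, (Z ω, Y ω))) :=
    entropy_congr₂ (fun x => ((x.1, x.2.2), x.2.1)) (fun x => (x.1.1, (x.2, x.1.2)))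
      (fun _ => rfl) (fun _ => rfl)
  rw [e1, e2]; ring

lemma cmi_comm (X : Ω → A) (Y : Ω → B) (Z : Ω → C) :
    condMutualInfo p X Y Z = condMutualInfo p Y X Z := by
  unfold condMutualInfo
  have e : entropy p (fun ω => ((Y ω, X ω), Z ω)) = entropy p (fun ω => ((X ω, Y ω), Z ω)) :=
    entropy_congr₂ (fun x => ((x.1.2, x.1.1), x.2)) (fun x => ((x.1.2, x.1.1), x.2))
      (fun _ => rfl) (fun _ => rfl)
  rw [e]; ring

lemma condEntropy_chain (X : Ω → A) (Y : Ω → B) (W : Ω → C) :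
    condEntropy p (fun ω => (X ω, Y ω)) W
      = condEntropy p X W + condEntropy p Y (fun ω => (W ω, X ω)) := by
  unfold condEntropy
  have e1 : entropy p (fun ω => ((X ω, Y ω), W ω))
      = entropy p (fun ω => (Y ω, (W ω, X ω))) :=
    entropy_congr₂ (fun x : B × C × A => ((x.2.2, x.1), x.2.1))
      (fun x : (A × B) × C => (x.1.2, (x.2, x.1.1))) (fun _ => rfl) (fun _ => rfl)
  have e2 : entropy p (fun ω => (W ω, X ω)) = entropy p (fun ω => (X ω, W ω)) :=
    entropy_comm X W
  rw [e1, e2]; ring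

lemma mutualInfo_chain (X : Ω → A) (Y : Ω → B) (Z : Ω → C) :
    mutualInfo p X (fun ω => (Y ω, Z ω))
      = mutualInfo p X Y + condMutualInfo p X Z Y := by
  unfold mutualInfo condMutualInfo
  have e1 : entropy p (fun ω => (Y ω, Z ω)) = entropy p (fun ω => (Z ω, Y ω)) :=
    entropy_comm Z Y
  have e2 : entropy p (fun ω => (X ω, (Y ω, Z ω)))
      = entropy p (fun ω => ((X ω, Z ω), Y ω)) :=
    entropy_congr₂ (fun x : (A × C) × B => (x.1.1, (x.2, x.1.2)))
      (fun x : A × B × C => ((x.1, x.2.2), x.2.1)) (fun _ => rfl) (fun _ => rfl)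
  rw [e1, e2]; ring

lemma cond_fst_congr {X1 : Ω → A} {X2 : Ω → B} (W : Ω → C)
    (f : A → B) (g : B → A) (hf : ∀ ω, f (X1 ω) = X2 ω) (hg : ∀ ω, g (X2 ω) = X1 ω) :
    condEntropy p X1 W = condEntropy p X2 W := by
  unfold condEntropy
  have e : entropy p (fun ω => (X1 ω, W ω)) = entropy p (fun ω => (X2 ω, W ω)) :=
    entropy_congr₂ (X := fun ω => (X2 ω, W ω)) (Y := fun ω => (X1 ω, W ω))
      (fun x => (g x.1, x.2)) (fun x => (f x.1, x.2))
      (fun ω => by simp [hg ω]) (fun ω => by simp [hf ω])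
  rw [e]

end aux2


section nonneg

open Finset Real

lemma sum3_comb {A B C : Type*} [Fintype A] [Fintype B] [Fintype C]
    (f g h k : A → B → C → ℝ) :
    (∑ a, ∑ b, ∑ c, f a b c) + (∑ a, ∑ b, ∑ c, g a b c)
      - (∑ a, ∑ b, ∑ c, h a b c) - (∑ a, ∑ b, ∑ c, k a b c)
      = ∑ a, ∑ b, ∑ c, (f a b c + g a b c - h a b c - k a b c) := by
  simp only [← Finset.sum_add_distrib, ← Finset.sum_sub_distrib]

lemma key_ineq {A B C : Type*} [Fintype A] [Fintype B] [Fintype C] (r : A → B → C → ℝ)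
    (h0 : ∀ a b c, 0 ≤ r a b c) (h1 : ∑ a, ∑ b, ∑ c, r a b c = 1) :
    0 ≤ (∑ a, ∑ c, Real.negMulLog (∑ b, r a b c))
        + (∑ b, ∑ c, Real.negMulLog (∑ a, r a b c))
        - (∑ a, ∑ b, ∑ c, Real.negMulLog (r a b c))
        - ∑ c, Real.negMulLog (∑ a, ∑ b, r a b c) := by
  set α : A → C → ℝ := fun a c => ∑ b, r a b c with hαdef
  set β : B → C → ℝ := fun b c => ∑ a, r a b c with hβdef
  set γ : C → ℝ := fun c => ∑ a, ∑ b, r a b c with hγdef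
  have hα0 : ∀ a c, 0 ≤ α a c := fun a c => Finset.sum_nonneg fun b _ => h0 a b c
  have hβ0 : ∀ b c, 0 ≤ β b c := fun b c => Finset.sum_nonneg fun a _ => h0 a b c
  have hγ0 : ∀ c, 0 ≤ γ c := fun c =>
    Finset.sum_nonneg fun a _ => Finset.sum_nonneg fun b _ => h0 a b c
  have hαγ : ∀ a c, α a c ≤ γ c := fun a c =>
    Finset.single_le_sum (fun a' _ => hα0 a' c) (Finset.mem_univ a)
  -- expansions
  have e1 : ∑ a, ∑ c, Real.negMulLog (α a c)
      = ∑ a, ∑ b, ∑ c, -(r a b c * Real.log (α a c)) := by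
    refine Finset.sum_congr rfl fun a _ => ?_
    rw [Finset.sum_comm]
    refine Finset.sum_congr rfl fun c _ => ?_
    rw [Real.negMulLog, neg_mul, hαdef]
    simp only [Finset.sum_mul, ← Finset.sum_neg_distrib]
  have e2 : ∑ b, ∑ c, Real.negMulLog (β b c)
      = ∑ a, ∑ b, ∑ c, -(r a b c * Real.log (β b c)) := by
    rw [Finset.sum_comm]
    have : ∀ c, ∑ b, Real.negMulLog (β b c) = ∑ b, ∑ a, -(r a b c * Real.log (β b c)) := by
      intro c
      refine Finset.sum_congr rfl fun b _ => ?_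
      rw [Real.negMulLog, neg_mul, hβdef]
      simp only [Finset.sum_mul, ← Finset.sum_neg_distrib]
    calc ∑ c, ∑ b, Real.negMulLog (β b c)
        = ∑ c, ∑ b, ∑ a, -(r a b c * Real.log (β b c)) :=
          Finset.sum_congr rfl fun c _ => this c
      _ = ∑ c, ∑ a, ∑ b, -(r a b c * Real.log (β b c)) :=
          Finset.sum_congr rfl fun c _ => Finset.sum_comm
      _ = ∑ a, ∑ c, ∑ b, -(r a b c * Real.log (β b c)) := Finset.sum_comm
      _ = ∑ a, ∑ b, ∑ c, -(r a b c * Real.log (β b c)) :=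
          Finset.sum_congr rfl fun a _ => Finset.sum_comm
  have e3 : ∑ a, ∑ b, ∑ c, Real.negMulLog (r a b c)
      = ∑ a, ∑ b, ∑ c, -(r a b c * Real.log (r a b c)) := by
    simp [Real.negMulLog, neg_mul]
  have e4 : ∑ c, Real.negMulLog (γ c)
      = ∑ a, ∑ b, ∑ c, -(r a b c * Real.log (γ c)) := by
    have : ∀ c, Real.negMulLog (γ c) = ∑ a, ∑ b, -(r a b c * Real.log (γ c)) := by
      intro c
      rw [Real.negMulLog, neg_mul, hγdef]
      simp only [Finset.sum_mul, ← Finset.sum_neg_distrib]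
    calc ∑ c, Real.negMulLog (γ c)
        = ∑ c, ∑ a, ∑ b, -(r a b c * Real.log (γ c)) :=
          Finset.sum_congr rfl fun c _ => this c
      _ = ∑ a, ∑ c, ∑ b, -(r a b c * Real.log (γ c)) := Finset.sum_comm
      _ = ∑ a, ∑ b, ∑ c, -(r a b c * Real.log (γ c)) :=
          Finset.sum_congr rfl fun a _ => Finset.sum_comm
  rw [e1, e2, e3, e4, sum3_comb]
  have step : ∀ a b c,
      -(r a b c * Real.log (α a c)) + -(r a b c * Real.log (β b c))
        - -(r a b c * Real.log (r a b c)) - -(r a b c * Real.log (γ c))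
      = -(r a b c * (Real.log (α a c) + Real.log (β b c)
          - Real.log (γ c) - Real.log (r a b c))) := by
    intro a b c; ring
  simp only [step]
  have term : ∀ a b c, r a b c * (Real.log (α a c) + Real.log (β b c)
      - Real.log (γ c) - Real.log (r a b c)) ≤ α a c * β b c / γ c - r a b c := by
    intro a b c
    rcases eq_or_lt_of_le (h0 a b c) with hr | hr
    · rw [← hr]
      simp only [zero_mul, sub_zero]
      exact div_nonneg (mul_nonneg (hα0 a c) (hβ0 b c)) (hγ0 c)
    · have hα : 0 < α a c :=
        lt_of_lt_of_le hr (Finset.single_le_sum (fun b' _ => h0 a b' c) (Finset.mem_univ b))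
      have hβ : 0 < β b c :=
        lt_of_lt_of_le hr (Finset.single_le_sum (fun a' _ => h0 a' b c) (Finset.mem_univ a))
      have hγ : 0 < γ c := lt_of_lt_of_le hα (hαγ a c)
      have hQ : 0 < α a c * β b c / γ c := by positivity
      have elog : Real.log (α a c) + Real.log (β b c) - Real.log (γ c) - Real.log (r a b c)
          = Real.log ((α a c * β b c / γ c) / r a b c) := by
        rw [Real.log_div hQ.ne' hr.ne', Real.log_div (mul_pos hα hβ).ne' hγ.ne',
          Real.log_mul hα.ne' hβ.ne']
        try ring
      rw [elog]
      have h2 : Real.log ((α a c * β b c / γ c) / r a b c)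
          ≤ (α a c * β b c / γ c) / r a b c - 1 :=
        Real.log_le_sub_one_of_pos (by positivity)
      calc r a b c * Real.log ((α a c * β b c / γ c) / r a b c)
          ≤ r a b c * ((α a c * β b c / γ c) / r a b c - 1) :=
            mul_le_mul_of_nonneg_left h2 hr.le
        _ = α a c * β b c / γ c - r a b c := by field_simp
  have hQsum : ∑ a, ∑ b, ∑ c, α a c * β b c / γ c ≤ 1 := by
    have reord : ∑ a, ∑ b, ∑ c, α a c * β b c / γ c
        = ∑ c, ∑ a, ∑ b, α a c * β b c / γ c := by
      calc ∑ a, ∑ b, ∑ c, α a c * β b c / γ c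
          = ∑ a, ∑ c, ∑ b, α a c * β b c / γ c :=
            Finset.sum_congr rfl fun a _ => Finset.sum_comm
        _ = ∑ c, ∑ a, ∑ b, α a c * β b c / γ c := Finset.sum_comm
    rw [reord]
    have hper : ∀ c, ∑ a, ∑ b, α a c * β b c / γ c ≤ γ c := by
      intro c
      have hβsum : ∑ b, β b c = γ c := Finset.sum_comm
      have hαsum : ∑ a, α a c = γ c := rfl
      have : ∑ a, ∑ b, α a c * β b c / γ c = γ c * γ c / γ c := by
        calc ∑ a, ∑ b, α a c * β b c / γ c
            = ∑ a, α a c * (∑ b, β b c) / γ c := by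
              refine Finset.sum_congr rfl fun a _ => ?_
              rw [← Finset.sum_div, ← Finset.mul_sum]
          _ = (∑ a, α a c) * γ c / γ c := by
              rw [hβsum, ← Finset.sum_div, ← Finset.sum_mul]
          _ = γ c * γ c / γ c := by rw [hαsum]
      rw [this]
      by_cases h : γ c = 0
      · simp [h]
      · rw [mul_div_assoc, div_self h, mul_one]
    have hγsum : ∑ c, γ c = 1 := by
      rw [← h1]
      calc ∑ c, ∑ a, ∑ b, r a b c
          = ∑ a, ∑ c, ∑ b, r a b c := Finset.sum_comm
        _ = ∑ a, ∑ b, ∑ c, r a b c :=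
            Finset.sum_congr rfl fun a _ => Finset.sum_comm
    calc ∑ c, ∑ a, ∑ b, α a c * β b c / γ c ≤ ∑ c, γ c :=
        Finset.sum_le_sum fun c _ => hper c
      _ = 1 := hγsum
  have hS : ∑ a, ∑ b, ∑ c, r a b c * (Real.log (α a c) + Real.log (β b c)
      - Real.log (γ c) - Real.log (r a b c)) ≤ 0 := by
    have h2 : ∑ a, ∑ b, ∑ c, r a b c * (Real.log (α a c) + Real.log (β b c)
        - Real.log (γ c) - Real.log (r a b c))
        ≤ ∑ a, ∑ b, ∑ c, (α a c * β b c / γ c - r a b c) := by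
      refine Finset.sum_le_sum fun a _ => Finset.sum_le_sum fun b _ =>
        Finset.sum_le_sum fun c _ => term a b c
    have h3 : ∑ a, ∑ b, ∑ c, (α a c * β b c / γ c - r a b c)
        = (∑ a, ∑ b, ∑ c, α a c * β b c / γ c) - ∑ a, ∑ b, ∑ c, r a b c := by
      simp only [Finset.sum_sub_distrib]
    rw [h3, h1] at h2
    linarith
  simp only [Finset.sum_neg_distrib]
  linarith
end nonneg

section nonneg2

variable {Ω : Type*} [Fintype Ω] {p : Ω → ℝ}

lemma condMutualInfo_nonneg (hp0 : ∀ ω, 0 ≤ p ω) (hp1 : ∑ ω, p ω = 1)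
    {A B C : Type*} [Fintype A] [Fintype B] [Fintype C]
    (X : Ω → A) (Y : Ω → B) (Z : Ω → C) :
    0 ≤ condMutualInfo p X Y Z := by
  set J : Ω → (A × B) × C := fun ω => ((X ω, Y ω), Z ω) with hJ
  set r : A → B → C → ℝ := fun a b c => pr p J ((a, b), c) with hr
  have hXZ : ∀ a c, pr p (fun ω => (X ω, Z ω)) (a, c) = ∑ b, r a b c := by
    intro a c
    have e : (fun ω => (X ω, Z ω)) = fun ω => (fun x : (A × B) × C => (x.1.1, x.2)) (J ω) := rfl
    rw [e, pr_comp (fun x : (A × B) × C => (x.1.1, x.2)) J]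
    rw [Fintype.sum_prod_type, Fintype.sum_prod_type]
    simp [Prod.ext_iff, ite_and, Finset.sum_ite_eq', Finset.sum_ite_eq, hr]
  have hYZ : ∀ b c, pr p (fun ω => (Y ω, Z ω)) (b, c) = ∑ a, r a b c := by
    intro b c
    have e : (fun ω => (Y ω, Z ω)) = fun ω => (fun x : (A × B) × C => (x.1.2, x.2)) (J ω) := rfl
    rw [e, pr_comp (fun x : (A × B) × C => (x.1.2, x.2)) J]
    rw [Fintype.sum_prod_type, Fintype.sum_prod_type]
    simp [Prod.ext_iff, ite_and, Finset.sum_ite_eq', Finset.sum_ite_eq, hr]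
  have hZ : ∀ c, pr p Z c = ∑ a, ∑ b, r a b c := by
    intro c
    have e : Z = fun ω => (fun x : (A × B) × C => x.2) (J ω) := rfl
    rw [e, pr_comp (fun x : (A × B) × C => x.2) J]
    rw [Fintype.sum_prod_type, Fintype.sum_prod_type]
    simp [Finset.sum_ite_eq', Finset.sum_ite_eq, hr]
  have eJ : entropy p J = ∑ a, ∑ b, ∑ c, Real.negMulLog (r a b c) := by
    unfold entropy
    rw [Fintype.sum_prod_type, Fintype.sum_prod_type]
  have eXZ : entropy p (fun ω => (X ω, Z ω)) = ∑ a, ∑ c, Real.negMulLog (∑ b, r a b c) := by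
    unfold entropy
    rw [Fintype.sum_prod_type]
    exact Finset.sum_congr rfl fun a _ => Finset.sum_congr rfl fun c _ => by rw [hXZ]
  have eYZ : entropy p (fun ω => (Y ω, Z ω)) = ∑ b, ∑ c, Real.negMulLog (∑ a, r a b c) := by
    unfold entropy
    rw [Fintype.sum_prod_type]
    exact Finset.sum_congr rfl fun b _ => Finset.sum_congr rfl fun c _ => by rw [hYZ]
  have eZ : entropy p Z = ∑ c, Real.negMulLog (∑ a, ∑ b, r a b c) := by
    unfold entropy
    exact Finset.sum_congr rfl fun c _ => by rw [hZ]
  have hsum : ∑ a, ∑ b, ∑ c, r a b c = 1 := by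
    have := sum_pr (p := p) hp1 J
    rw [Fintype.sum_prod_type, Fintype.sum_prod_type] at this
    exact this
  have h0 : ∀ a b c, 0 ≤ r a b c := fun a b c => pr_nonneg hp0 J ((a, b), c)
  unfold condMutualInfo
  rw [eXZ, eYZ, eZ]
  have eJ' : entropy p (fun ω => ((X ω, Y ω), Z ω)) = ∑ a, ∑ b, ∑ c, Real.negMulLog (r a b c) := eJ
  rw [eJ']
  exact key_ineq r h0 hsum

end nonneg2

section tools

universe u v

variable {Ω : Type*} [Fintype Ω] {p : Ω → ℝ}

lemma cond_le (hp0 : ∀ ω, 0 ≤ p ω) (hp1 : ∑ ω, p ω = 1)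
    {A B C : Type*} [Fintype A] [Fintype B] [Fintype C]
    (X : Ω → A) (Y : Ω → B) (Z : Ω → C) :
    condEntropy p X (fun ω => (Z ω, Y ω)) ≤ condEntropy p X Z := by
  have h := condMutualInfo_nonneg hp0 hp1 X Y Z
  rw [cmi_eq] at h
  linarith

lemma cond_mono (hp0 : ∀ ω, 0 ≤ p ω) (hp1 : ∑ ω, p ω = 1)
    {A C C' : Type*} [Fintype A] [Fintype C] [Fintype C']
    (X : Ω → A) (Z : Ω → C) (g : C → C') :
    condEntropy p X Z ≤ condEntropy p X (fun ω => g (Z ω)) := by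
  have h1 : condEntropy p X (fun ω => (g (Z ω), Z ω)) ≤ condEntropy p X (fun ω => g (Z ω)) :=
    cond_le hp0 hp1 X Z (fun ω => g (Z ω))
  have h2 : condEntropy p X (fun ω => (g (Z ω), Z ω)) = condEntropy p X Z := by
    unfold condEntropy
    have e1 : entropy p (fun ω => (X ω, (g (Z ω), Z ω))) = entropy p (fun ω => (X ω, Z ω)) :=
      entropy_congr₂ (X := fun ω => (X ω, Z ω)) (Y := fun ω => (X ω, (g (Z ω), Z ω)))
        (fun x => (x.1, (g x.2, x.2))) (fun x => (x.1, x.2.2)) (fun _ => rfl) (fun _ => rfl)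
    have e2 : entropy p (fun ω => (g (Z ω), Z ω)) = entropy p Z :=
      entropy_congr₂ (X := Z) (fun c => (g c, c)) (fun x => x.2) (fun _ => rfl) (fun _ => rfl)
    rw [e1, e2]
  linarith

lemma cond_congr (hp0 : ∀ ω, 0 ≤ p ω) (hp1 : ∑ ω, p ω = 1)
    {A C C' : Type*} [Fintype A] [Fintype C] [Fintype C']
    (X : Ω → A) {Z1 : Ω → C} {Z2 : Ω → C'} (f : C → C') (g : C' → C)
    (hf : ∀ ω, f (Z1 ω) = Z2 ω) (hg : ∀ ω, g (Z2 ω) = Z1 ω) :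
    condEntropy p X Z1 = condEntropy p X Z2 := by
  have h1 := cond_mono hp0 hp1 X Z1 f
  have h2 := cond_mono hp0 hp1 X Z2 g
  rw [show (fun ω => f (Z1 ω)) = Z2 from funext hf] at h1
  rw [show (fun ω => g (Z2 ω)) = Z1 from funext hg] at h2
  linarith

lemma condEntropy_zero_tuple {T : Fin 0 → Type u} [∀ i, Fintype (T i)]
    {Cw : Type v} [Fintype Cw] (X : ∀ i, Ω → T i) (W : Ω → Cw) :
    condEntropy p (fun ω => fun i => X i ω) W = 0 := by
  unfold condEntropy
  have e : entropy p (fun ω => ((fun i : Fin 0 => X i ω), W ω)) = entropy p W :=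
    entropy_congr₂ (X := W) (fun w => ((fun i : Fin 0 => i.elim0), w)) (fun x => x.2)
      (fun ω => by
        have : (fun i : Fin 0 => X i ω) = (fun i : Fin 0 => i.elim0) := by
          funext i; exact i.elim0
        rw [this])
      (fun _ => rfl)
  rw [e]; ring

lemma subadd (hp0 : ∀ ω, 0 ≤ p ω) (hp1 : ∑ ω, p ω = 1) :
    ∀ (n : ℕ) (T : Fin n → Type u) [instT : ∀ i, Fintype (T i)] {Cw : Type (max u v)}
      [Fintype Cw] (X : ∀ i, Ω → T i) (W : Ω → Cw),
      condEntropy p (fun ω => fun i => X i ω) W ≤ ∑ i, condEntropy p (X i) W := by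
  intro n
  induction n with
  | zero =>
    intro T instT Cw instW X W
    simp [condEntropy_zero_tuple X W]
  | succ n IH =>
    intro T instT Cw instW X W
    have key : condEntropy p (fun ω => fun i => X i ω) W
        = condEntropy p (fun ω => (X 0 ω, fun i : Fin n => X i.succ ω)) W := by
      refine cond_fst_congr W (fun t => (t 0, fun i => t i.succ)) (fun x => Fin.cons x.1 x.2)
        (fun ω => rfl) (fun ω => ?_)
      funext i
      refine Fin.cases ?_ ?_ i <;> simp
    rw [key, condEntropy_chain, Fin.sum_univ_succ]
    have h1 : condEntropy p (fun ω => fun i : Fin n => X i.succ ω) (fun ω => (W ω, X 0 ω))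
        ≤ condEntropy p (fun ω => fun i : Fin n => X i.succ ω) W :=
      cond_mono hp0 hp1 _ (fun ω => (W ω, X 0 ω)) Prod.fst
    have h2 := IH (fun i => T i.succ) (fun i => X i.succ) W
    linarith

lemma chainLB (hp0 : ∀ ω, 0 ≤ p ω) (hp1 : ∑ ω, p ω = 1) :
    ∀ (n : ℕ) (T : Fin n → Type u) [instT : ∀ i, Fintype (T i)] {Cw : Type (max u v)}
      [Fintype Cw] (D : ∀ i, Ω → T i) (W : Ω → Cw),
      ∑ i, condEntropy p (D i) (fun ω => (W ω, fun j : {j : Fin n // j ≠ i} => D j.1 ω))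
        ≤ condEntropy p (fun ω => fun i => D i ω) W := by
  intro n
  induction n with
  | zero =>
    intro T instT Cw instW D W
    simp [condEntropy_zero_tuple D W]
  | succ n IH =>
    intro T instT Cw instW D W
    have key : condEntropy p (fun ω => fun i => D i ω) W
        = condEntropy p (fun ω => (D 0 ω, fun i : Fin n => D i.succ ω)) W := by
      refine cond_fst_congr W (fun t => (t 0, fun i => t i.succ)) (fun x => Fin.cons x.1 x.2)
        (fun ω => rfl) (fun ω => ?_)
      funext i
      refine Fin.cases ?_ ?_ i <;> simp
    rw [key, condEntropy_chain, Fin.sum_univ_succ]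
    have t0 : condEntropy p (D 0)
        (fun ω => (W ω, fun j : {j : Fin (n+1) // j ≠ 0} => D j.1 ω))
        ≤ condEntropy p (D 0) W :=
      cond_mono hp0 hp1 _ _ Prod.fst
    have hsum : ∑ i : Fin n, condEntropy p (D i.succ)
        (fun ω => (W ω, fun j : {j : Fin (n+1) // j ≠ i.succ} => D j.1 ω))
        ≤ condEntropy p (fun ω => fun i : Fin n => D i.succ ω) (fun ω => (W ω, D 0 ω)) := by
      have IH' := IH (fun i => T i.succ) (fun i => D i.succ) (fun ω => (W ω, D 0 ω))
      refine le_trans (le_of_eq ?_) IH'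
      refine Finset.sum_congr rfl fun i _ => ?_
      refine cond_congr hp0 hp1 (D i.succ)
        (fun x : Cw × (∀ j : {j : Fin (n+1) // j ≠ i.succ}, T j.1) =>
          ((x.1, x.2 ⟨0, (Fin.succ_ne_zero i).symm⟩),
            fun j : {j : Fin n // j ≠ i} =>
              x.2 ⟨j.1.succ, fun h => j.2 (Fin.succ_injective n h)⟩))
        (fun x : (Cw × T 0) × (∀ j : {j : Fin n // j ≠ i}, T j.1.succ) =>
          (x.1.1, fun k => Fin.cases (motive := fun k' => k' ≠ i.succ → T k')
            (fun _ => x.1.2)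
            (fun l hl => x.2 ⟨l, fun e => hl (congrArg Fin.succ e)⟩) k.1 k.2))
        (fun ω => rfl) (fun ω => ?_)
      refine Prod.ext rfl ?_
      funext k
      rcases k with ⟨k, hk⟩
      revert hk
      refine Fin.cases ?_ ?_ k <;> intros <;> simp
    linarith

end tools

set_option maxHeartbeats 1000000 in
/-- meta-learning estimation error decomposition. -/
theorem statement5 {Ω Ψ : Type*} [Fintype Ω] [Fintype Ψ] {M : ℕ}
    {Θs Ds : Fin M → Type*} [∀ m, Fintype (Θs m)] [∀ m, Fintype (Ds m)]
    (p : Ω → ℝ) (hp0 : ∀ ω, 0 ≤ p ω) (hp1 : ∑ ω, p ω = 1)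
    (ψ : Ω → Ψ) (θ : ∀ m, Ω → Θs m) (D : ∀ m, Ω → Ds m)
    (ha : condEntropy p (fun ω => (fun m => θ m ω)) ψ = ∑ m, condEntropy p (θ m) ψ)
    (hb : ∀ m : Fin M, condMutualInfo p (D m)
        (fun ω => (fun j : {j : Fin M // j ≠ m} => (θ j.1 ω, D j.1 ω)))
        (fun ω => (ψ ω, θ m ω)) = 0) :
    mutualInfo p (fun ω => (fun m => D m ω)) (fun ω => (ψ ω, fun m => θ m ω))
      = mutualInfo p (fun ω => (fun m => D m ω)) ψ
        + ∑ m, condMutualInfo p (D m) (θ m) ψ := by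
  have step1 : mutualInfo p (fun ω => (fun m => D m ω)) (fun ω => (ψ ω, fun m => θ m ω))
      = mutualInfo p (fun ω => (fun m => D m ω)) ψ
        + condMutualInfo p (fun ω => (fun m => D m ω)) (fun ω => (fun m => θ m ω)) ψ :=
    mutualInfo_chain _ ψ _
  have big : condMutualInfo p (fun ω => (fun m => D m ω)) (fun ω => (fun m => θ m ω)) ψ
      = ∑ m, condMutualInfo p (D m) (θ m) ψ := by
    apply le_antisymm
    · -- ≤ direction
      have h0 : condMutualInfo p (fun ω => (fun m => D m ω)) (fun ω => (fun m => θ m ω)) ψ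
          = condEntropy p (fun ω => (fun m => D m ω)) ψ
            - condEntropy p (fun ω => (fun m => D m ω)) (fun ω => (ψ ω, fun m => θ m ω)) :=
        cmi_eq _ _ _
      have h1 : condEntropy p (fun ω => (fun m => D m ω)) ψ
          ≤ ∑ m, condEntropy p (D m) ψ := by
        have hs := subadd.{u_4, u_2} hp0 hp1 M Ds D (W := fun ω => ULift.up.{u_4} (ψ ω))
        have hL : condEntropy p (fun ω => (fun m => D m ω)) (fun ω => ULift.up.{u_4} (ψ ω))
            = condEntropy p (fun ω => (fun m => D m ω)) ψ :=
          cond_congr hp0 hp1 _ ULift.down ULift.up (fun _ => rfl) (fun _ => rfl)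
        have hR : ∀ m : Fin M, condEntropy p (D m) (fun ω => ULift.up.{u_4} (ψ ω))
            = condEntropy p (D m) ψ := fun m =>
          cond_congr hp0 hp1 _ ULift.down ULift.up (fun _ => rfl) (fun _ => rfl)
        calc condEntropy p (fun ω => (fun m => D m ω)) ψ
            = condEntropy p (fun ω => (fun m => D m ω)) (fun ω => ULift.up.{u_4} (ψ ω)) := hL.symm
          _ ≤ ∑ m, condEntropy p (D m) (fun ω => ULift.up.{u_4} (ψ ω)) := hs
          _ = ∑ m, condEntropy p (D m) ψ := Finset.sum_congr rfl fun m _ => hR m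
      have h2 : ∑ m, condEntropy p (D m) (fun ω => (ψ ω, θ m ω))
          ≤ condEntropy p (fun ω => (fun m => D m ω)) (fun ω => (ψ ω, fun m => θ m ω)) := by
        have hc := chainLB.{u_4, max u_2 u_3} hp0 hp1 M Ds D
          (W := fun ω => ULift.up.{u_4} (ψ ω, fun m => θ m ω))
        have hR : condEntropy p (fun ω => (fun m => D m ω))
              (fun ω => ULift.up.{u_4} (ψ ω, fun m => θ m ω))
            = condEntropy p (fun ω => (fun m => D m ω)) (fun ω => (ψ ω, fun m => θ m ω)) :=
          cond_congr hp0 hp1 _ ULift.down ULift.up (fun _ => rfl) (fun _ => rfl)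
        have hL : ∀ m : Fin M,
            condEntropy p (D m) (fun ω => (ULift.up.{u_4} (ψ ω, fun m' => θ m' ω),
              fun j : {j : Fin M // j ≠ m} => D j.1 ω))
            = condEntropy p (D m) (fun ω => (ψ ω, θ m ω)) := by
          intro m
          have e1 : condEntropy p (D m) (fun ω => (ULift.up.{u_4} (ψ ω, fun m' => θ m' ω),
                fun j : {j : Fin M // j ≠ m} => D j.1 ω))
              = condEntropy p (D m) (fun ω => ((ψ ω, θ m ω),
                fun j : {j : Fin M // j ≠ m} => (θ j.1 ω, D j.1 ω))) := by
            refine cond_congr hp0 hp1 (D m)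
              (fun x => ((x.1.down.1, x.1.down.2 m), fun j => (x.1.down.2 j.1, x.2 j)))
              (fun y => (ULift.up (y.1.1, fun k =>
                  if h : k = m then cast (congrArg Θs h).symm y.1.2 else (y.2 ⟨k, h⟩).1),
                fun j => (y.2 j).2))
              (fun ω => rfl) (fun ω => ?_)
            have e : (fun k => if h : k = m then
                  cast (congrArg Θs h).symm (θ m ω) else θ k ω) = fun m' => θ m' ω := by
              funext k
              by_cases h : k = m
              · subst h; simp
              · simp [h]
            simp only [e]
          have e2 := hb m
          rw [cmi_eq] at e2
          rw [e1]
          linarith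
        calc ∑ m, condEntropy p (D m) (fun ω => (ψ ω, θ m ω))
            = ∑ m, condEntropy p (D m) (fun ω => (ULift.up.{u_4} (ψ ω, fun m' => θ m' ω),
                fun j : {j : Fin M // j ≠ m} => D j.1 ω)) :=
              Finset.sum_congr rfl fun m _ => (hL m).symm
          _ ≤ condEntropy p (fun ω => (fun m => D m ω))
                (fun ω => ULift.up.{u_4} (ψ ω, fun m => θ m ω)) := hc
          _ = condEntropy p (fun ω => (fun m => D m ω))
                (fun ω => (ψ ω, fun m => θ m ω)) := hR
      have h3 : ∑ m, condMutualInfo p (D m) (θ m) ψ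
          = (∑ m, condEntropy p (D m) ψ)
            - ∑ m, condEntropy p (D m) (fun ω => (ψ ω, θ m ω)) := by
        rw [← Finset.sum_sub_distrib]
        exact Finset.sum_congr rfl fun m _ => cmi_eq _ _ _
      linarith
    · -- ≥ direction
      have g0 : condMutualInfo p (fun ω => (fun m => D m ω)) (fun ω => (fun m => θ m ω)) ψ
          = condMutualInfo p (fun ω => (fun m => θ m ω)) (fun ω => (fun m => D m ω)) ψ :=
        cmi_comm _ _ _
      have g1 : condMutualInfo p (fun ω => (fun m => θ m ω)) (fun ω => (fun m => D m ω)) ψ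
          = condEntropy p (fun ω => (fun m => θ m ω)) ψ
            - condEntropy p (fun ω => (fun m => θ m ω)) (fun ω => (ψ ω, fun m => D m ω)) :=
        cmi_eq _ _ _
      have g2 : condEntropy p (fun ω => (fun m => θ m ω)) (fun ω => (ψ ω, fun m => D m ω))
          ≤ ∑ m, condEntropy p (θ m) (fun ω => (ψ ω, D m ω)) := by
        have hs := subadd.{u_3, max u_2 u_4} hp0 hp1 M Θs θ
          (W := fun ω => ULift.up.{u_3} (ψ ω, fun m => D m ω))
        have hL : condEntropy p (fun ω => (fun m => θ m ω))
              (fun ω => ULift.up.{u_3} (ψ ω, fun m => D m ω))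
            = condEntropy p (fun ω => (fun m => θ m ω)) (fun ω => (ψ ω, fun m => D m ω)) :=
          cond_congr hp0 hp1 _ ULift.down ULift.up (fun _ => rfl) (fun _ => rfl)
        have hR : ∀ m : Fin M, condEntropy p (θ m)
              (fun ω => ULift.up.{u_3} (ψ ω, fun m' => D m' ω))
            ≤ condEntropy p (θ m) (fun ω => (ψ ω, D m ω)) := fun m =>
          cond_mono hp0 hp1 (θ m) (fun ω => ULift.up.{u_3} (ψ ω, fun m' => D m' ω))
            (fun x => (x.down.1, x.down.2 m))
        calc condEntropy p (fun ω => (fun m => θ m ω)) (fun ω => (ψ ω, fun m => D m ω))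
            = condEntropy p (fun ω => (fun m => θ m ω))
                (fun ω => ULift.up.{u_3} (ψ ω, fun m => D m ω)) := hL.symm
          _ ≤ ∑ m, condEntropy p (θ m) (fun ω => ULift.up.{u_3} (ψ ω, fun m' => D m' ω)) := hs
          _ ≤ ∑ m, condEntropy p (θ m) (fun ω => (ψ ω, D m ω)) :=
              Finset.sum_le_sum fun m _ => hR m
      have g3 : ∑ m, condMutualInfo p (D m) (θ m) ψ
          = (∑ m, condEntropy p (θ m) ψ)
            - ∑ m, condEntropy p (θ m) (fun ω => (ψ ω, D m ω)) := by
        rw [← Finset.sum_sub_distrib]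
        refine Finset.sum_congr rfl fun m _ => ?_
        rw [cmi_comm]
        exact cmi_eq _ _ _
      linarith
  rw [step1, big]

end
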